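/- Let p be a prime, α ≥ 1 an integer, and w an integer with 0 ≤ w < α(p−1). Then the minimum of #{v ∈ 𝔽_p^{3α} : |v|_M > w and f(v) ≠ 0} over all nonzero reduced polynomials f ∈ 𝔽_p[x_1,…,x_{3α}] of total degree at most 2α(p−1) equals C(α, >w)_p. (This gives the distance d = C(α,>w)_p of the quantum triorthogonal code obtained from the Manhattan-weight puncturing of RM_p(r, 3α) with maximal degree r = α(p−1) − 1.) -/

import Mathlib

/-- The `p`-nomial coefficient `C(m,s)_p`: the coefficient of `x^s` in
`(1 + x + ⋯ + x^{p−1})^m ∈ ℤ[x]`, extended by `0` for `s < 0`. -/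
noncomputable def pnomial (p m : ℕ) (s : ℤ) : ℤ :=
  if 0 ≤ s then
    ((∑ i ∈ Finset.range p, (Polynomial.X : Polynomial ℤ) ^ i) ^ m).coeff s.toNat
  else 0

/-- `C(m,>s)_p = ∑_{i>s} C(m,i)_p`.  Since `C(m,i)_p = 0` for `i > m(p−1)`,
the sum may be truncated at `m(p−1)`. -/
noncomputable def pnomialGT (p m : ℕ) (s : ℤ) : ℤ :=
  ∑ i ∈ Finset.range (m * (p - 1) + 1), if s < (i : ℤ) then pnomial p m i else 0

/-- `Δ_p(m,r,w)`: writing `r = α(p−1)+β` with `0 ≤ β ≤ p−2` (so `α = r/(p−1)`,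
`β = r % (p−1)`), this is `C(m−α,>w)_p` if `β = 0`, and
`C(m−α,>w)_p − ∑_{j=p−β}^{p−1} C(m−α−1,>w−j)_p` otherwise. -/
noncomputable def Δp (p m r : ℕ) (w : ℤ) : ℤ :=
  if r % (p - 1) = 0 then pnomialGT p (m - r / (p - 1)) w
  else pnomialGT p (m - r / (p - 1)) w -
    ∑ j ∈ Finset.Icc (p - r % (p - 1)) (p - 1),
      pnomialGT p (m - r / (p - 1) - 1) (w - (j : ℤ))

/-- The Manhattan weight `|v|_M = ∑ i, val(v_i)` of a vector `v ∈ 𝔽_p^m`. -/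
def manhattanWeight {p m : ℕ} (v : Fin m → ZMod p) : ℕ := ∑ i, (v i).val

open Finset Polynomial


lemma pnomial_neg {p m : ℕ} {s : ℤ} (h : s < 0) : pnomial p m s = 0 := by
  simp [pnomial, not_le.2 h]

lemma pnomial_natCast (p m k : ℕ) :
    pnomial p m (k : ℤ) = ((∑ i ∈ Finset.range p, (X : Polynomial ℤ) ^ i) ^ m).coeff k := by
  simp [pnomial]

lemma pnomial_zero (p : ℕ) (s : ℤ) : pnomial p 0 s = if s = 0 then 1 else 0 := by
  rcases lt_or_ge s 0 with h | h
  · rw [pnomial_neg h, if_neg h.ne]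
  · obtain ⟨k, rfl⟩ := Int.eq_ofNat_of_zero_le h
    rw [pnomial_natCast, pow_zero, Polynomial.coeff_one]
    by_cases hk : k = 0 <;> simp [hk]

lemma pnomial_succ (p m : ℕ) (s : ℤ) :
    pnomial p (m + 1) s = ∑ j ∈ Finset.range p, pnomial p m (s - j) := by
  rcases lt_or_ge s 0 with h | h
  · rw [pnomial_neg h]
    refine (Finset.sum_eq_zero fun j _ => pnomial_neg (by omega)).symm
  · obtain ⟨n, rfl⟩ := Int.eq_ofNat_of_zero_le h
    rw [pnomial_natCast, pow_succ, Polynomial.coeff_mul]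
    rw [Finset.Nat.sum_antidiagonal_eq_sum_range_succ
      (f := fun a b => ((∑ i ∈ Finset.range p, (X : Polynomial ℤ) ^ i) ^ m).coeff a *
        (∑ i ∈ Finset.range p, (X : Polynomial ℤ) ^ i).coeff b)]
    have hco : ∀ b : ℕ, (∑ i ∈ Finset.range p, (X : Polynomial ℤ) ^ i).coeff b
        = if b < p then 1 else 0 := by
      intro b
      rw [Polynomial.finset_sum_coeff]
      simp only [Polynomial.coeff_X_pow]
      rw [Finset.sum_ite_eq (Finset.range p) b (fun _ => (1:ℤ))]
      simp
    have lhs_eq : ∑ b ∈ Finset.range (n+1),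
        ((∑ i ∈ Finset.range p, (X : Polynomial ℤ) ^ i) ^ m).coeff (n - b) *
          (∑ i ∈ Finset.range p, (X : Polynomial ℤ) ^ i).coeff (n - (n - b))
        = ∑ b ∈ (Finset.range (n+1)).filter (· < p),
            ((∑ i ∈ Finset.range p, (X : Polynomial ℤ) ^ i) ^ m).coeff (n - b) := by
      rw [Finset.sum_filter]
      refine Finset.sum_congr rfl fun b hb => ?_
      rw [Finset.mem_range] at hb
      rw [Nat.sub_sub_self (by omega), hco]
      split <;> simp
    have rhs_eq : ∑ j ∈ Finset.range p, pnomial p m ((n : ℤ) - j)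
        = ∑ j ∈ (Finset.range p).filter (· ≤ n),
            ((∑ i ∈ Finset.range p, (X : Polynomial ℤ) ^ i) ^ m).coeff (n - j) := by
      rw [Finset.sum_filter]
      refine Finset.sum_congr rfl fun j _ => ?_
      rcases le_or_gt j n with hj | hj
      · rw [if_pos hj, ← Nat.cast_sub hj, pnomial_natCast]
      · rw [if_neg (by omega), pnomial_neg (by omega)]
    rw [← Finset.sum_range_reflect]
    simp only [Nat.succ_sub_one]
    rw [lhs_eq, rhs_eq]
    apply Finset.sum_congr _ fun _ _ => rfl
    ext b; simp; omega


open Finset Polynomial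

section Counting

variable {p : ℕ} [NeZero p]

lemma consSplitCard (m : ℕ) (Q : (Fin (m+1) → ZMod p) → Prop) [DecidablePred Q]
    (Q' : ZMod p → (Fin m → ZMod p) → Prop) [∀ c, DecidablePred (Q' c)]
    (hQ : ∀ c v', Q (Fin.cons c v') ↔ Q' c v') :
    (Finset.univ.filter Q).card
      = ∑ c : ZMod p, (Finset.univ.filter (Q' c)).card := by
  classical
  rw [Finset.card_eq_sum_card_fiberwise (f := fun v => v 0) (t := Finset.univ)
    (fun _ _ => Finset.mem_univ _)]
  refine Finset.sum_congr rfl fun c _ => ?_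
  refine Finset.card_bij' (fun v _ => Fin.tail v) (fun u _ => Fin.cons c u) ?_ ?_ ?_ ?_
  · intro v hv
    simp only [Finset.mem_filter, Finset.mem_univ, true_and] at hv ⊢
    rw [← (hQ c (Fin.tail v))]
    have h2 : v 0 = c := hv.2
    rw [show c = v 0 from h2.symm, Fin.cons_self_tail]
    exact hv.1
  · intro u hu
    simp only [Finset.mem_filter, Finset.mem_univ, true_and] at hu ⊢
    exact ⟨(hQ c u).2 hu, rfl⟩
  · intro v hv
    simp only [Finset.mem_filter] at hv
    rw [show c = v 0 from hv.2.symm, Fin.cons_self_tail]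
  · intro u _
    simp

omit [NeZero p] in
lemma manhattanWeight_cons (m : ℕ) (c : ZMod p) (v : Fin m → ZMod p) :
    manhattanWeight (Fin.cons c v) = c.val + manhattanWeight v := by
  unfold manhattanWeight
  rw [Fin.sum_univ_succ]
  simp

lemma valSum (g : ℕ → ℤ) : ∑ c : ZMod p, g (ZMod.val c) = ∑ j ∈ Finset.range p, g j := by
  refine Finset.sum_nbij' (fun c => ZMod.val c) (fun j => (j : ZMod p)) ?_ ?_ ?_ ?_ ?_
  · intro c _; exact Finset.mem_range.2 (ZMod.val_lt c)
  · intro j _; exact Finset.mem_univ _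
  · intro c _; simp [ZMod.natCast_val, ZMod.cast_id]
  · intro j hj; exact ZMod.val_cast_of_lt (Finset.mem_range.1 hj)
  · intro c _; rfl

lemma card_wt_eq (m : ℕ) (s : ℤ) :
    (((Finset.univ : Finset (Fin m → ZMod p)).filter
        (fun v => (manhattanWeight v : ℤ) = s)).card : ℤ) = pnomial p m s := by
  induction m generalizing s with
  | zero =>
    rw [pnomial_zero]
    have h0 : ∀ v : Fin 0 → ZMod p, (manhattanWeight v : ℤ) = 0 := fun v => by
      simp [manhattanWeight]
    by_cases hs : s = 0
    · subst hs
      rw [if_pos rfl, Finset.filter_true_of_mem (fun v _ => h0 v)]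
      simp
    · rw [if_neg hs, Finset.filter_false_of_mem, Finset.card_empty]
      · simp
      · intro v _
        rw [h0 v]
        exact fun h => hs h.symm
  | succ m ih =>
    rw [consSplitCard m _ (fun c v' => (manhattanWeight v' : ℤ) = s - (ZMod.val c : ℤ))
      (fun c v' => by rw [manhattanWeight_cons]; push_cast; constructor <;> intro h <;> omega)]
    rw [pnomial_succ]
    push_cast
    rw [← valSum (fun j => pnomial p m (s - j))]
    exact Finset.sum_congr rfl fun c _ => ih (s - c.val)

/-- number of points of Manhattan weight `> w`. -/
lemma card_wtGT_eq (m : ℕ) (w : ℤ) :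
    (((Finset.univ : Finset (Fin m → ZMod p)).filter
        (fun v => w < (manhattanWeight v : ℤ))).card : ℤ) = pnomialGT p m w := by
  classical
  have hwt : ∀ v : Fin m → ZMod p, manhattanWeight v < m * (p-1) + 1 := by
    intro v
    have : ∀ i, (v i).val ≤ p - 1 := fun i => by
      have := ZMod.val_lt (v i); omega
    calc manhattanWeight v ≤ ∑ _i : Fin m, (p-1) := Finset.sum_le_sum (fun i _ => this i)
    _ = m * (p-1) := by simp [mul_comm]
    _ < m * (p-1) + 1 := by omega
  rw [Finset.card_eq_sum_card_fiberwise (f := fun v => manhattanWeight v)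
    (t := Finset.range (m * (p-1) + 1)) (fun v _ => Finset.mem_range.2 (hwt v))]
  unfold pnomialGT
  push_cast
  refine Finset.sum_congr rfl fun n hn => ?_
  by_cases hwn : w < (n : ℤ)
  · rw [if_pos hwn, ← card_wt_eq m (n : ℤ)]
    congr 1
    apply congrArg
    ext v
    simp only [Finset.mem_filter, Finset.mem_univ, true_and]
    constructor
    · rintro ⟨h1, h2⟩; exact_mod_cast h2
    · intro h
      have hn2 : manhattanWeight v = n := by exact_mod_cast h
      exact ⟨by rw [hn2]; exact_mod_cast hwn, hn2⟩
  · rw [if_neg hwn]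
    norm_num
    intro v hv
    intro h
    rw [h] at hv
    exact hwn (by exact_mod_cast hv)

lemma pnomialGT_nonneg (m : ℕ) (w : ℤ) : 0 ≤ pnomialGT p m w := by
  rw [← card_wtGT_eq (p := p)]
  positivity

lemma pnomialGT_antitone (m : ℕ) {w w' : ℤ} (h : w ≤ w') :
    pnomialGT p m w' ≤ pnomialGT p m w := by
  classical
  rw [← card_wtGT_eq (p := p), ← card_wtGT_eq (p := p)]
  have hsub : (Finset.univ : Finset (Fin m → ZMod p)).filter
      (fun v => w' < (manhattanWeight v : ℤ)) ⊆
      (Finset.univ : Finset (Fin m → ZMod p)).filter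
      (fun v => w < (manhattanWeight v : ℤ)) := by
    intro v hv
    simp only [Finset.mem_filter, Finset.mem_univ, true_and] at hv ⊢
    omega
  exact_mod_cast Finset.card_le_card hsub

lemma pnomialGT_succ (m : ℕ) (w : ℤ) :
    pnomialGT p (m+1) w = ∑ j ∈ Finset.range p, pnomialGT p m (w - j) := by
  classical
  rw [← card_wtGT_eq (p := p)]
  rw [consSplitCard m _ (fun c v' => w - (ZMod.val c : ℤ) < (manhattanWeight v' : ℤ))
    (fun c v' => by rw [manhattanWeight_cons]; push_cast; constructor <;> intro h <;> omega)]
  push_cast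
  rw [← valSum (fun j => pnomialGT p m (w - j))]
  exact Finset.sum_congr rfl fun c _ => card_wtGT_eq m (w - c.val)

end Counting
section Ineq

variable (g : ℤ → ℤ) (w : ℤ)

/-- double interval sum -/
def RR (A B : ℕ) : ℤ := ∑ t ∈ Finset.range A, ∑ j ∈ Finset.range B, g (w - t - j)

variable {g w}

lemma RR_symm (A B : ℕ) : RR g w A B = RR g w B A := by
  unfold RR
  rw [Finset.sum_comm]
  refine Finset.sum_congr rfl fun t _ => Finset.sum_congr rfl fun j _ => ?_
  ring_nf

lemma RR_mono_left (hg : ∀ s, 0 ≤ g s) {A A' : ℕ} (h : A ≤ A') (B : ℕ) :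
    RR g w A B ≤ RR g w A' B := by
  unfold RR
  apply Finset.sum_le_sum_of_subset_of_nonneg (Finset.range_subset_range.2 h)
  intro t _ _
  exact Finset.sum_nonneg fun j _ => hg _

lemma RR_step (hg : ∀ s, 0 ≤ g s) {a b : ℕ} (hba : b ≤ a) :
    RR g w (a+1) b ≤ RR g w a (b+1) := by
  have h1 : RR g w (a+1) b = RR g w a b + ∑ j ∈ Finset.range b, g (w - a - j) := by
    unfold RR; rw [Finset.sum_range_succ]
  have h2 : RR g w a (b+1) = RR g w a b + ∑ t ∈ Finset.range a, g (w - t - b) := by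
    unfold RR
    rw [← Finset.sum_add_distrib]
    refine Finset.sum_congr rfl fun t _ => ?_
    rw [Finset.sum_range_succ]
  rw [h1, h2]
  have key : ∑ j ∈ Finset.range b, g (w - a - j)
      = ∑ t ∈ Finset.Ico (a - b) a, g (w - t - b) := by
    refine Finset.sum_nbij' (fun j => j + (a - b)) (fun t => t - (a - b)) ?_ ?_ ?_ ?_ ?_
    · intro j hj; simp only [Finset.mem_range] at hj; simp only [Finset.mem_Ico]; omega
    · intro t ht; simp only [Finset.mem_Ico] at ht; simp only [Finset.mem_range]; omega
    · intro j hj; simp only [Finset.mem_range] at hj; omega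
    · intro t ht; simp only [Finset.mem_Ico] at ht; omega
    · intro j hj
      simp only [Finset.mem_range] at hj
      congr 1
      have : ((j + (a - b) : ℕ) : ℤ) = (j : ℤ) + a - b := by
        push_cast [Nat.cast_sub hba]; ring
      rw [this]; ring
  rw [key]
  have hsub : Finset.Ico (a - b) a ⊆ Finset.range a := by
    intro t ht; simp only [Finset.mem_Ico] at ht; simp only [Finset.mem_range]; omega
  exact add_le_add le_rfl
    (Finset.sum_le_sum_of_subset_of_nonneg hsub (fun _ _ _ => hg _))

lemma RR_chain (hg : ∀ s, 0 ≤ g s) : ∀ (k a b : ℕ), b + 2*k ≤ a →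
    RR g w a b ≤ RR g w (a - k) (b + k) := by
  intro k
  induction k with
  | zero => intro a b _; simp
  | succ k ih =>
    intro a b hk
    have h1 : RR g w a b ≤ RR g w (a-1) (b+1) := by
      have ha : a = (a-1) + 1 := by omega
      rw [ha]
      exact RR_step hg (by omega)
    refine h1.trans ?_
    have := ih (a-1) (b+1) (by omega)
    have heq : a - 1 - k = a - (k+1) := by omega
    have heq2 : b + 1 + k = b + (k+1) := by omega
    rwa [heq, heq2] at this

lemma RR_dominate (hg : ∀ s, 0 ≤ g s) {A B A' B' : ℕ} (hsum : A + B = A' + B')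
    (hmin : min A' B' ≤ min A B) : RR g w A' B' ≤ RR g w A B := by
  -- wlog A' ≥ B'
  rcases le_total B' A' with h' | h'
  · rcases le_total B A with h | h
    · -- chain from (A',B') to (A,B) : k = B - B'
      have hk : B' + 2*(B - B') ≤ A' := by omega
      have := RR_chain (w := w) hg (B - B') A' B' hk
      have e1 : A' - (B - B') = A := by omega
      have e2 : B' + (B - B') = B := by omega
      rwa [e1, e2] at this
    · -- target reversed: reach (B, A) from (A', B')
      have hk : B' + 2*(A - B') ≤ A' := by omega
      have := RR_chain (w := w) hg (A - B') A' B' hk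
      have e1 : A' - (A - B') = B := by omega
      have e2 : B' + (A - B') = A := by omega
      rw [e1, e2] at this
      rwa [RR_symm B A] at this
  · -- swap primes
    rw [RR_symm A' B']
    rcases le_total B A with h | h
    · have hk : A' + 2*(B - A') ≤ B' := by omega
      have := RR_chain (w := w) hg (B - A') B' A' hk
      have e1 : B' - (B - A') = A := by omega
      have e2 : A' + (B - A') = B := by omega
      rwa [e1, e2] at this
    · have hk : A' + 2*(A - A') ≤ B' := by omega
      have := RR_chain (w := w) hg (A - A') B' A' hk
      have e1 : B' - (A - A') = B := by omega
      have e2 : A' + (A - A') = A := by omega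
      rw [e1, e2] at this
      rwa [RR_symm B A] at this

/-- sorted sum lower bound: for `H` monotone, the sum of `H` over a finset of naturals
is at least the sum over `range card`. -/
lemma sorted_sum_le {H : ℕ → ℤ} (hH : Monotone H) :
    ∀ (n : ℕ) (V : Finset ℕ), V.card = n → ∑ t ∈ Finset.range n, H t ≤ ∑ t ∈ V, H t := by
  intro n
  induction n with
  | zero =>
    intro V hV
    rw [Finset.card_eq_zero] at hV
    simp [hV]
  | succ n ih =>
    intro V hV
    have hne : V.Nonempty := by
      rw [← Finset.card_pos, hV]; omega
    set M := V.max' hne with hM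
    have hMV : M ∈ V := V.max'_mem hne
    have hcard : (V.erase M).card = n := by
      rw [Finset.card_erase_of_mem hMV, hV]
      omega
    have hnM : n ≤ M := by
      by_contra hc
      push_neg at hc
      have : V ⊆ Finset.range (M+1) := by
        intro x hx
        simp only [Finset.mem_range]
        have := Finset.le_max' V x hx
        omega
      have := Finset.card_le_card this
      rw [hV, Finset.card_range] at this
      omega
    rw [Finset.sum_range_succ]
    have := ih (V.erase M) hcard
    have hsplit : ∑ t ∈ V, H t = ∑ t ∈ V.erase M, H t + H M :=
      (Finset.sum_erase_add V H hMV).symm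
    rw [hsplit]
    exact add_le_add this (hH hnM)

end Ineq
section MvMachinery

open MvPolynomial

variable {p : ℕ} [Fact p.Prime]

lemma reduced_totalDegree_le {m : ℕ} (f : MvPolynomial (Fin m) (ZMod p))
    (hred : ∀ i, f.degreeOf i ≤ p - 1) : f.totalDegree ≤ m * (p-1) := by
  apply Finset.sup_le
  intro μ hμ
  have h1 : (μ.sum fun _ e => e) = ∑ i, μ i := by
    rw [Finsupp.sum_fintype]
    intro i; rfl
  rw [h1]
  calc ∑ i, μ i ≤ ∑ _i : Fin m, (p-1) :=
        Finset.sum_le_sum fun i _ => (MvPolynomial.degreeOf_le_iff.mp (hred i) μ hμ)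
    _ = m * (p-1) := by simp [mul_comm]

lemma reduced_exists_eval_ne_zero {m : ℕ} (f : MvPolynomial (Fin m) (ZMod p))
    (hf : f ≠ 0) (hred : ∀ i, f.degreeOf i ≤ p - 1) :
    ∃ v : Fin m → ZMod p, MvPolynomial.eval v f ≠ 0 := by
  by_contra hc
  push_neg at hc
  refine hf (MvPolynomial.eq_zero_of_eval_eq_zero _ _ f hc ?_)
  rw [MvPolynomial.mem_restrictDegree]
  intro s hs i
  rw [ZMod.card]
  exact (MvPolynomial.degreeOf_le_iff.mp (hred i) s hs)

lemma eval_cons_eq {m : ℕ} (f : MvPolynomial (Fin (m+1)) (ZMod p)) (c : ZMod p)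
    (v : Fin m → ZMod p) :
    MvPolynomial.eval (Fin.cons c v) f
      = MvPolynomial.eval v ((MvPolynomial.finSuccEquiv (ZMod p) m f).eval (MvPolynomial.C c)) := by
  rw [MvPolynomial.eval_eq_eval_mv_eval']
  rw [← Polynomial.eval₂_at_apply (MvPolynomial.eval v) (MvPolynomial.C c)]
  rw [Polynomial.eval_map]
  congr 1
  simp

lemma degreeOf_coeff_finSuccEquiv' {m : ℕ} (f : MvPolynomial (Fin (m+1)) (ZMod p))
    (i : Fin m) (k : ℕ) :
    ((MvPolynomial.finSuccEquiv (ZMod p) m f).coeff k).degreeOf i ≤ f.degreeOf i.succ := by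
  rw [MvPolynomial.degreeOf_le_iff]
  intro μ hμ
  rw [MvPolynomial.mem_support_coeff_finSuccEquiv] at hμ
  have := MvPolynomial.degreeOf_le_iff.mp (le_refl (f.degreeOf i.succ)) _ hμ
  simpa [Finsupp.cons_succ] using this

lemma degreeOf_polyEval_le {m : ℕ} (Q : Polynomial (MvPolynomial (Fin m) (ZMod p)))
    (c : ZMod p) (i : Fin m) (d : ℕ) (h : ∀ k, (Q.coeff k).degreeOf i ≤ d) :
    (Q.eval (MvPolynomial.C c)).degreeOf i ≤ d := by
  rw [Polynomial.eval_eq_sum_range]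
  refine le_trans (MvPolynomial.degreeOf_sum_le _ _ _) ?_
  apply Finset.sup_le
  intro k _
  refine le_trans (MvPolynomial.degreeOf_mul_le _ _ _) ?_
  have h2 : (MvPolynomial.C c ^ k : MvPolynomial (Fin m) (ZMod p)).degreeOf i = 0 := by
    rw [← map_pow, MvPolynomial.degreeOf_C]
  have := h k
  omega

lemma totalDegree_polyEval_le {m : ℕ} (Q : Polynomial (MvPolynomial (Fin m) (ZMod p)))
    (c : ZMod p) (V : ℕ) (h : ∀ k, (Q.coeff k ≠ 0) → (Q.coeff k).totalDegree ≤ V) :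
    (Q.eval (MvPolynomial.C c)).totalDegree ≤ V := by
  rw [Polynomial.eval_eq_sum_range]
  refine le_trans (MvPolynomial.totalDegree_finset_sum _ _) ?_
  apply Finset.sup_le
  intro k _
  by_cases hk : Q.coeff k = 0
  · simp [hk]
  · refine le_trans (MvPolynomial.totalDegree_mul _ _) ?_
    have h2 : (MvPolynomial.C c ^ k : MvPolynomial (Fin m) (ZMod p)).totalDegree = 0 := by
      rw [← map_pow, MvPolynomial.totalDegree_C]
    have := h k hk
    omega

lemma exists_factor {R : Type*} [CommRing R] [IsDomain R] (F : Polynomial R) (hF : F ≠ 0)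
    (S : Finset R) (hS : ∀ c ∈ S, F.eval c = 0) :
    S.card ≤ F.natDegree ∧ ∃ G, F = (∏ c ∈ S, (Polynomial.X - Polynomial.C c)) * G := by
  classical
  have hle : S.val ≤ F.roots := by
    rw [Multiset.le_iff_count]
    intro a
    by_cases ha : a ∈ S
    · rw [Multiset.count_eq_one_of_mem S.nodup ha]
      rw [Multiset.one_le_count_iff_mem, Polynomial.mem_roots']
      exact ⟨hF, hS a ha⟩
    · rw [Multiset.count_eq_zero_of_notMem (by simpa using ha)]
      omega
  constructor
  · calc S.card = Multiset.card S.val := rfl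
      _ ≤ Multiset.card F.roots := Multiset.card_le_card hle
      _ ≤ F.natDegree := Polynomial.card_roots' F
  · have hdvd : (∏ c ∈ S, (Polynomial.X - Polynomial.C c)) ∣ F := by
      have h1 : (∏ c ∈ S, (Polynomial.X - Polynomial.C c))
          = (S.val.map (fun a => Polynomial.X - Polynomial.C a)).prod := rfl
      rw [h1]
      exact dvd_trans
        (Multiset.prod_dvd_prod_of_le (Multiset.map_le_map hle))
        (Polynomial.prod_multiset_X_sub_C_dvd F)
    obtain ⟨G, hG⟩ := hdvd
    exact ⟨G, hG⟩

end MvMachinery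
section DegreeKey

open MvPolynomial Polynomial

variable {p : ℕ} [Fact p.Prime]

lemma factor_degree_key {m : ℕ} (f : MvPolynomial (Fin (m+1)) (ZMod p))
    (P0 : Polynomial (ZMod p)) (hP0 : P0.Monic)
    (G : Polynomial (MvPolynomial (Fin m) (ZMod p))) (hG : G ≠ 0)
    (hFG : MvPolynomial.finSuccEquiv (ZMod p) m f = P0.map MvPolynomial.C * G) :
    ∃ V : ℕ, (∀ k, G.coeff k ≠ 0 → (G.coeff k).totalDegree ≤ V)
      ∧ V + P0.natDegree ≤ f.totalDegree := by
  classical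
  set e₁ := P0.natDegree with he₁
  set D := (Finset.range (G.natDegree + 1)).filter (fun k => G.coeff k ≠ 0) with hD
  have hDne : D.Nonempty := by
    refine ⟨G.natDegree, ?_⟩
    rw [hD, Finset.mem_filter, Finset.mem_range]
    exact ⟨by omega, Polynomial.leadingCoeff_ne_zero.2 hG⟩
  set V := D.sup (fun k => (G.coeff k).totalDegree + k) with hV
  have hVle : ∀ k, G.coeff k ≠ 0 → (G.coeff k).totalDegree + k ≤ V := by
    intro k hk
    rw [hV]
    refine Finset.le_sup (f := fun k => (G.coeff k).totalDegree + k) ?_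
    rw [hD, Finset.mem_filter, Finset.mem_range]
    exact ⟨by have := Polynomial.le_natDegree_of_ne_zero hk; omega, hk⟩
  refine ⟨V, fun k hk => le_trans (by omega) (hVle k hk), ?_⟩
  set E := D.filter (fun k => (G.coeff k).totalDegree + k = V) with hE
  have hEne : E.Nonempty := by
    obtain ⟨k₀, hk₀D, hk₀⟩ := Finset.exists_mem_eq_sup D hDne
      (fun k => (G.coeff k).totalDegree + k)
    exact ⟨k₀, by rw [hE, Finset.mem_filter]; exact ⟨hk₀D, hk₀.symm⟩⟩
  set i₀ := E.max' hEne with hi₀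
  have hi₀mem : i₀ ∈ E := E.max'_mem hEne
  have hi₀ne : G.coeff i₀ ≠ 0 := by
    have := hi₀mem
    rw [hE, Finset.mem_filter, hD, Finset.mem_filter] at this
    exact this.1.2
  have hi₀V : (G.coeff i₀).totalDegree + i₀ = V := by
    have := hi₀mem
    rw [hE, Finset.mem_filter] at this
    exact this.2
  set τ := (G.coeff i₀).totalDegree with hτ
  have hgt : ∀ k, i₀ < k → G.coeff k ≠ 0 → (G.coeff k).totalDegree + k < V := by
    intro k hik hk
    rcases lt_or_eq_of_le (hVle k hk) with h | h
    · exact h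
    · exfalso
      have hkE : k ∈ E := by
        rw [hE, Finset.mem_filter, hD, Finset.mem_filter, Finset.mem_range]
        exact ⟨⟨by have := Polynomial.le_natDegree_of_ne_zero hk; omega, hk⟩, h⟩
      have := Finset.le_max' E k hkE
      omega
  -- monomial of top degree in G.coeff i₀
  obtain ⟨μ, hμmem, hμsum⟩ := Finset.exists_mem_eq_sup (G.coeff i₀).support
    (Finset.nonempty_iff_ne_empty.2 (by rwa [Ne, MvPolynomial.support_eq_empty])) (fun s => s.sum fun _ e => e)
  -- τ = μ.sum
  have hμτ : (μ.sum fun _ e => e) = τ := hμsum.symm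
  have hcoeffF : MvPolynomial.coeff μ ((MvPolynomial.finSuccEquiv (ZMod p) m f).coeff (i₀ + e₁))
      = MvPolynomial.coeff μ (G.coeff i₀) := by
    rw [hFG, Polynomial.coeff_mul, MvPolynomial.coeff_sum]
    rw [Finset.sum_eq_single (e₁, i₀)]
    · rw [Polynomial.coeff_map, hP0.coeff_natDegree]
      simp
    · rintro ⟨a, b⟩ hab hne
      rw [HasAntidiagonal.mem_antidiagonal] at hab
      rw [Polynomial.coeff_map, MvPolynomial.coeff_C_mul]
      rcases lt_or_ge e₁ a with h | h
      · rw [Polynomial.coeff_eq_zero_of_natDegree_lt h, zero_mul]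
      · have ha : a < e₁ := by
          rcases lt_or_eq_of_le h with h' | h'
          · exact h'
          · exfalso; apply hne; subst h'; simp at hab ⊢; omega
        have hb : i₀ < b := by omega
        by_cases hGb : G.coeff b = 0
        · rw [hGb, MvPolynomial.coeff_zero, mul_zero]
        · have hlt := hgt b hb hGb
          rw [MvPolynomial.coeff_eq_zero_of_totalDegree_lt, mul_zero]
          dsimp only
          have hsum : (∑ i ∈ μ.support, μ i) = τ := hμτ
          omega
    · intro hni
      exfalso
      apply hni
      rw [HasAntidiagonal.mem_antidiagonal]
      omega
  have hFne : (MvPolynomial.finSuccEquiv (ZMod p) m f).coeff (i₀ + e₁) ≠ 0 := by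
    intro h
    rw [h, MvPolynomial.coeff_zero] at hcoeffF
    exact (MvPolynomial.mem_support_iff.1 hμmem) hcoeffF.symm
  have hμF : μ ∈ ((MvPolynomial.finSuccEquiv (ZMod p) m f).coeff (i₀ + e₁)).support := by
    rw [MvPolynomial.mem_support_iff, hcoeffF]
    exact MvPolynomial.mem_support_iff.1 hμmem
  have hτle : τ ≤ ((MvPolynomial.finSuccEquiv (ZMod p) m f).coeff (i₀ + e₁)).totalDegree := by
    rw [← hμτ]
    exact MvPolynomial.le_totalDegree hμF
  have hfinal := MvPolynomial.totalDegree_coeff_finSuccEquiv_add_le f (i₀ + e₁) hFne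
  omega

end DegreeKey
section MainInduction

open MvPolynomial Polynomial Finset

lemma mapC_eval {p : ℕ} [Fact p.Prime] {m : ℕ} (P0 : Polynomial (ZMod p)) (c : ZMod p) :
    (P0.map (MvPolynomial.C : ZMod p →+* MvPolynomial (Fin m) (ZMod p))).eval
        (MvPolynomial.C c) = MvPolynomial.C (P0.eval c) := by
  rw [Polynomial.eval_map, Polynomial.eval₂_at_apply]

lemma main_bound (p : ℕ) [Fact p.Prime] (m : ℕ) :
    ∀ (f : MvPolynomial (Fin m) (ZMod p)), f ≠ 0 → (∀ i, f.degreeOf i ≤ p - 1) →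
    ∀ a e : ℕ, 1 ≤ a → e ≤ p - 1 → f.totalDegree + a * (p-1) ≤ m * (p-1) + e →
    ∀ w : ℤ,
    ∑ j ∈ Finset.range (p - e), pnomialGT p (a-1) (w - j)
      ≤ ((Finset.univ.filter (fun v : Fin m → ZMod p =>
          w < (manhattanWeight v : ℤ) ∧ MvPolynomial.eval v f ≠ 0)).card : ℤ) := by
  haveI : NeZero p := ⟨(Fact.out : p.Prime).ne_zero⟩
  have hp2 : 2 ≤ p := (Fact.out : p.Prime).two_le
  induction m with
  | zero =>
    intro f hf hred a e ha he hdeg w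
    have htd0 : f.totalDegree = 0 := by
      have := reduced_totalDegree_le f hred
      simpa using this
    have ha1 : a = 1 := by
      by_contra hc
      have ha2 : 2 ≤ a := by omega
      have := Nat.mul_le_mul_right (p-1) ha2
      omega
    have he' : e = p - 1 := by
      subst ha1
      omega
    have hpe : p - e = 1 := by omega
    rw [hpe, Finset.sum_range_one, ha1]
    simp only [Nat.sub_self, Nat.cast_zero, sub_zero]
    obtain ⟨v₀, hv₀⟩ := reduced_exists_eval_ne_zero f hf hred
    have heval : ∀ v : Fin 0 → ZMod p, MvPolynomial.eval v f ≠ 0 := fun v =>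
      (Subsingleton.elim v₀ v) ▸ hv₀
    rw [← card_wtGT_eq 0 w]
    have hsub : (Finset.univ : Finset (Fin 0 → ZMod p)).filter
        (fun v => w < (manhattanWeight v : ℤ)) ⊆
        Finset.univ.filter (fun v => w < (manhattanWeight v : ℤ) ∧ MvPolynomial.eval v f ≠ 0) := by
      intro v hv
      simp only [Finset.mem_filter, Finset.mem_univ, true_and] at hv ⊢
      exact ⟨hv, heval v⟩
    exact_mod_cast Finset.card_le_card hsub
  | succ m ih =>
    intro f hf hred a e ha he hdeg w
    classical
    set F := MvPolynomial.finSuccEquiv (ZMod p) m f with hFdef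
    have hFne : F ≠ 0 := by
      intro h
      apply hf
      have := congrArg (MvPolynomial.finSuccEquiv (ZMod p) m).symm h
      rwa [AlgEquiv.symm_apply_apply, map_zero] at this
    set S0 := Finset.univ.filter (fun c : ZMod p => F.eval (MvPolynomial.C c) = 0) with hS0
    set e₁ := S0.card with he₁
    -- factor out ∏ (X - C c)
    set Simg := S0.image (fun c => (MvPolynomial.C c : MvPolynomial (Fin m) (ZMod p)))
      with hSimg
    have hSimgcard : Simg.card = e₁ :=
      Finset.card_image_of_injective S0 (MvPolynomial.C_injective _ _)
    obtain ⟨hcard, G, hFPG⟩ := exists_factor F hFne Simg (by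
      intro x hx
      rw [hSimg, Finset.mem_image] at hx
      obtain ⟨c, hc, rfl⟩ := hx
      rw [hS0, Finset.mem_filter] at hc
      exact hc.2)
    set P0 := ∏ c ∈ S0, (Polynomial.X - Polynomial.C c) with hP0def
    have hP0monic : P0.Monic :=
      Polynomial.monic_prod_of_monic _ _ (fun c _ => Polynomial.monic_X_sub_C c)
    have hP0deg : P0.natDegree = e₁ := by
      rw [hP0def, Polynomial.natDegree_prod _ _ (fun c _ => Polynomial.X_sub_C_ne_zero c)]
      simp [he₁]
    have hmap : P0.map (MvPolynomial.C : ZMod p →+* MvPolynomial (Fin m) (ZMod p))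
        = ∏ x ∈ Simg, (Polynomial.X - Polynomial.C x) := by
      rw [hP0def, Polynomial.map_prod]
      rw [hSimg, Finset.prod_image (fun x _ y _ h => MvPolynomial.C_injective _ _ h)]
      refine Finset.prod_congr rfl fun c _ => ?_
      rw [Polynomial.map_sub, Polynomial.map_X, Polynomial.map_C]
    have hFG : F = P0.map MvPolynomial.C * G := by rw [hmap]; exact hFPG
    have hGne : G ≠ 0 := by
      intro h
      rw [h, mul_zero] at hFG
      exact hFne hFG
    obtain ⟨V, hVcoeff, hVdeg⟩ := factor_degree_key f P0 hP0monic G hGne hFG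
    rw [hP0deg] at hVdeg
    have he₁le : e₁ ≤ p - 1 := by
      have h1 : F.natDegree = f.degreeOf 0 := MvPolynomial.natDegree_finSuccEquiv f
      have h2 := hred 0
      omega
    -- partial evaluations
    have hfc : ∀ c : ZMod p, F.eval (MvPolynomial.C c)
        = MvPolynomial.C (P0.eval c) * G.eval (MvPolynomial.C c) := by
      intro c
      rw [hFG, Polynomial.eval_mul, mapC_eval]
    have hP0c : ∀ c ∈ Finset.univ \ S0, P0.eval c ≠ 0 := by
      intro c hc
      rw [Finset.mem_sdiff] at hc
      rw [hP0def, Polynomial.eval_prod]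
      apply Finset.prod_ne_zero_iff.2
      intro s hs
      rw [Polynomial.eval_sub, Polynomial.eval_X, Polynomial.eval_C, sub_ne_zero]
      intro hcs
      exact hc.2 (hcs ▸ hs)
    have hFevalne : ∀ c ∈ Finset.univ \ S0, F.eval (MvPolynomial.C c) ≠ 0 := by
      intro c hc
      rw [Finset.mem_sdiff] at hc
      intro h
      exact hc.2 (by rw [hS0, Finset.mem_filter]; exact ⟨Finset.mem_univ _, h⟩)
    have hhne : ∀ c ∈ Finset.univ \ S0, G.eval (MvPolynomial.C c) ≠ 0 := by
      intro c hc hzero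
      exact hFevalne c hc (by rw [hfc c, hzero, mul_zero])
    have hhred : ∀ c ∈ Finset.univ \ S0, ∀ i,
        (G.eval (MvPolynomial.C c)).degreeOf i ≤ p - 1 := by
      intro c hc i
      have hrw : G.eval (MvPolynomial.C c)
          = MvPolynomial.C (P0.eval c)⁻¹ * F.eval (MvPolynomial.C c) := by
        rw [hfc c, ← mul_assoc, ← map_mul, inv_mul_cancel₀ (hP0c c hc), map_one, one_mul]
      rw [hrw]
      refine le_trans (MvPolynomial.degreeOf_C_mul_le _ _ _) ?_
      refine degreeOf_polyEval_le F c i (p-1) (fun k => ?_)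
      exact le_trans (degreeOf_coeff_finSuccEquiv' f i k) (hred i.succ)
    have hhtd : ∀ c : ZMod p, (G.eval (MvPolynomial.C c)).totalDegree ≤ V :=
      fun c => totalDegree_polyEval_le G c V hVcoeff
    -- counting split
    have hsplit : ((Finset.univ.filter (fun v : Fin (m+1) → ZMod p =>
          w < (manhattanWeight v : ℤ) ∧ MvPolynomial.eval v f ≠ 0)).card : ℤ)
        = ∑ c : ZMod p, ((Finset.univ.filter (fun v' : Fin m → ZMod p =>
            w - (ZMod.val c : ℤ) < (manhattanWeight v' : ℤ) ∧
            MvPolynomial.eval v' (F.eval (MvPolynomial.C c)) ≠ 0)).card : ℤ) := by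
      rw [consSplitCard m _ (fun c v' =>
          w - (ZMod.val c : ℤ) < (manhattanWeight v' : ℤ) ∧
          MvPolynomial.eval v' (F.eval (MvPolynomial.C c)) ≠ 0)
        (fun c v' => by
          rw [manhattanWeight_cons, eval_cons_eq]
          constructor
          · rintro ⟨h1, h2⟩
            refine ⟨by push_cast at h1 ⊢; omega, h2⟩
          · rintro ⟨h1, h2⟩
            refine ⟨by push_cast at h1 ⊢; omega, h2⟩)]
      push_cast
      rfl
    -- drop the terms in S0
    have hdrop : ∑ c ∈ Finset.univ \ S0, ((Finset.univ.filter (fun v' : Fin m → ZMod p =>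
            w - (ZMod.val c : ℤ) < (manhattanWeight v' : ℤ) ∧
            MvPolynomial.eval v' (F.eval (MvPolynomial.C c)) ≠ 0)).card : ℤ)
        ≤ ∑ c : ZMod p, ((Finset.univ.filter (fun v' : Fin m → ZMod p =>
            w - (ZMod.val c : ℤ) < (manhattanWeight v' : ℤ) ∧
            MvPolynomial.eval v' (F.eval (MvPolynomial.C c)) ≠ 0)).card : ℤ) := by
      apply Finset.sum_le_sum_of_subset_of_nonneg (Finset.sdiff_subset)
      intro c _ _
      exact Nat.cast_nonneg _
    -- replace F.eval by G.eval in the filters over the complement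
    have hswitch : ∀ c ∈ Finset.univ \ S0,
        (Finset.univ.filter (fun v' : Fin m → ZMod p =>
            w - (ZMod.val c : ℤ) < (manhattanWeight v' : ℤ) ∧
            MvPolynomial.eval v' (F.eval (MvPolynomial.C c)) ≠ 0)).card
        = (Finset.univ.filter (fun v' : Fin m → ZMod p =>
            w - (ZMod.val c : ℤ) < (manhattanWeight v' : ℤ) ∧
            MvPolynomial.eval v' (G.eval (MvPolynomial.C c)) ≠ 0)).card := by
      intro c hc
      apply congrArg
      apply Finset.filter_congr
      intro v _
      rw [hfc c, map_mul, MvPolynomial.eval_C]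
      constructor
      · rintro ⟨h1, h2⟩
        exact ⟨h1, fun hz => h2 (by rw [hz, mul_zero])⟩
      · rintro ⟨h1, h2⟩
        exact ⟨h1, mul_ne_zero (hP0c c hc) h2⟩
    -- cardinality of the complement
    have hcompl : (Finset.univ \ S0).card = p - e₁ := by
      rw [Finset.card_sdiff_of_subset (Finset.subset_univ _), Finset.card_univ, ZMod.card]
    -- generic per-case machinery
    have key : ∀ a' e' : ℕ, 1 ≤ a' → e' ≤ p - 1 →
        (∀ c ∈ Finset.univ \ S0,
          (G.eval (MvPolynomial.C c)).totalDegree + a' * (p-1) ≤ m * (p-1) + e') →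
        RR (pnomialGT p (a'-1)) w (p - e₁) (p - e')
          ≤ ∑ c ∈ Finset.univ \ S0, ((Finset.univ.filter (fun v' : Fin m → ZMod p =>
              w - (ZMod.val c : ℤ) < (manhattanWeight v' : ℤ) ∧
              MvPolynomial.eval v' (G.eval (MvPolynomial.C c)) ≠ 0)).card : ℤ) := by
      intro a' e' ha' he' hdeg'
      have hperc : ∀ c ∈ Finset.univ \ S0,
          ∑ j ∈ Finset.range (p - e'), pnomialGT p (a'-1) (w - (ZMod.val c : ℤ) - j)
          ≤ ((Finset.univ.filter (fun v' : Fin m → ZMod p =>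
              w - (ZMod.val c : ℤ) < (manhattanWeight v' : ℤ) ∧
              MvPolynomial.eval v' (G.eval (MvPolynomial.C c)) ≠ 0)).card : ℤ) := by
        intro c hc
        exact ih (G.eval (MvPolynomial.C c)) (hhne c hc) (hhred c hc) a' e' ha' he'
          (hdeg' c hc) (w - (ZMod.val c : ℤ))
      have hmono : Monotone (fun t : ℕ =>
          ∑ j ∈ Finset.range (p - e'), pnomialGT p (a'-1) (w - (t:ℤ) - j)) := by
        intro t t' htt
        apply Finset.sum_le_sum
        intro j _
        apply pnomialGT_antitone
        have : (t:ℤ) ≤ t' := by exact_mod_cast htt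
        omega
      have hsort : ∑ t ∈ Finset.range (p - e₁),
            (∑ j ∈ Finset.range (p - e'), pnomialGT p (a'-1) (w - (t:ℤ) - j))
          ≤ ∑ c ∈ Finset.univ \ S0,
            (∑ j ∈ Finset.range (p - e'), pnomialGT p (a'-1) (w - (ZMod.val c : ℤ) - j)) := by
        rw [show (∑ c ∈ Finset.univ \ S0,
            (∑ j ∈ Finset.range (p - e'), pnomialGT p (a'-1) (w - (ZMod.val c : ℤ) - j)))
          = ∑ t ∈ (Finset.univ \ S0).image ZMod.val,
            (∑ j ∈ Finset.range (p - e'), pnomialGT p (a'-1) (w - (t:ℤ) - j)) from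
          (Finset.sum_image (f := fun t : ℕ =>
            ∑ j ∈ Finset.range (p - e'), pnomialGT p (a'-1) (w - (t:ℤ) - j))
            (fun x _ y _ h => ZMod.val_injective p h)).symm]
        exact sorted_sum_le hmono (p - e₁) ((Finset.univ \ S0).image ZMod.val)
          (by rw [Finset.card_image_of_injective _ (ZMod.val_injective p), hcompl])
      exact le_trans hsort (Finset.sum_le_sum hperc)
    -- assembling the right-hand side
    have htail : ∑ c ∈ Finset.univ \ S0, ((Finset.univ.filter (fun v' : Fin m → ZMod p =>
              w - (ZMod.val c : ℤ) < (manhattanWeight v' : ℤ) ∧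
              MvPolynomial.eval v' (G.eval (MvPolynomial.C c)) ≠ 0)).card : ℤ)
        ≤ ((Finset.univ.filter (fun v : Fin (m+1) → ZMod p =>
          w < (manhattanWeight v : ℤ) ∧ MvPolynomial.eval v f ≠ 0)).card : ℤ) := by
      rw [hsplit]
      refine le_trans (le_of_eq (Finset.sum_congr rfl fun c hc => ?_)) hdrop
      rw [hswitch c hc]
    have hm1 : (m+1) * (p-1) = m * (p-1) + (p-1) := by ring
    rcases Nat.lt_or_ge e₁ e with hcase | hcase
    · rcases Nat.lt_or_ge a 1 with hbad | ha1'
      · omega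
      rcases Nat.lt_or_ge 1 a with ha2 | haone
      · -- Case B : e₁ < e, a ≥ 2
        obtain ⟨b, rfl⟩ : ∃ b, a = b + 2 := ⟨a - 2, by omega⟩
        have hkey := key (b+1) (e - e₁) (by omega) (by omega) (by
          intro c hc
          have h1 := hhtd c
          have h2 : (b+2) * (p-1) = (b+1) * (p-1) + (p-1) := by ring
          omega)
        have hdom : RR (pnomialGT p b) w (p - e) p
            ≤ RR (pnomialGT p b) w (p - e₁) (p - (e - e₁)) := by
          apply RR_dominate (fun s => pnomialGT_nonneg _ s)
          · omega
          · omega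
        have hRRe : RR (pnomialGT p b) w (p - e) p
            = ∑ j ∈ Finset.range (p - e), pnomialGT p (b + 2 - 1) (w - j) := by
          unfold RR
          refine Finset.sum_congr rfl fun t _ => ?_
          rw [show b + 2 - 1 = b + 1 from rfl, pnomialGT_succ]
        have hrw : (b + 1 - 1) = b := rfl
        rw [hrw] at hkey
        calc ∑ j ∈ Finset.range (p - e), pnomialGT p (b + 2 - 1) (w - j)
            = RR (pnomialGT p b) w (p - e) p := hRRe.symm
          _ ≤ RR (pnomialGT p b) w (p - e₁) (p - (e - e₁)) := hdom
          _ ≤ _ := le_trans hkey htail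
      · -- Case C : e₁ < e, a = 1
        have ha1'' : a = 1 := by omega
        subst ha1''
        have hkey := key 1 (p-1) le_rfl le_rfl (by
          intro c hc
          have h1 := reduced_totalDegree_le (G.eval (MvPolynomial.C c)) (hhred c hc)
          omega)
        have hdom : RR (pnomialGT p 0) w (p - e) (p - (p-1))
            ≤ RR (pnomialGT p 0) w (p - e₁) (p - (p-1)) :=
          RR_mono_left (fun s => pnomialGT_nonneg _ s) (by omega) _
        have hRRe : RR (pnomialGT p 0) w (p - e) (p - (p-1))
            = ∑ j ∈ Finset.range (p - e), pnomialGT p (1 - 1) (w - j) := by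
          unfold RR
          rw [show p - (p-1) = 1 from by omega]
          refine Finset.sum_congr rfl fun t _ => ?_
          rw [Finset.sum_range_one]
          norm_num
        calc ∑ j ∈ Finset.range (p - e), pnomialGT p (1-1) (w - j)
            = RR (pnomialGT p 0) w (p - e) (p - (p-1)) := hRRe.symm
          _ ≤ RR (pnomialGT p 0) w (p - e₁) (p - (p-1)) := hdom
          _ ≤ _ := le_trans hkey htail
    · -- Case A : e ≤ e₁
      have hkey := key a (p - 1 - e₁ + e) ha (by omega) (by
        intro c hc
        have h1 := hhtd c
        omega)
      have hdom : RR (pnomialGT p (a-1)) w (p - e) 1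
          ≤ RR (pnomialGT p (a-1)) w (p - e₁) (p - (p - 1 - e₁ + e)) := by
        apply RR_dominate (fun s => pnomialGT_nonneg _ s)
        · omega
        · omega
      have hRRe : RR (pnomialGT p (a-1)) w (p - e) 1
          = ∑ j ∈ Finset.range (p - e), pnomialGT p (a - 1) (w - j) := by
        unfold RR
        refine Finset.sum_congr rfl fun t _ => ?_
        rw [Finset.sum_range_one]
        norm_num
      calc ∑ j ∈ Finset.range (p - e), pnomialGT p (a-1) (w - j)
          = RR (pnomialGT p (a-1)) w (p - e) 1 := hRRe.symm
        _ ≤ RR (pnomialGT p (a-1)) w (p - e₁) (p - (p - 1 - e₁ + e)) := hdom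
        _ ≤ _ := le_trans hkey htail

end MainInduction
section Membership

open MvPolynomial Finset

variable {p : ℕ} [NeZero p]

lemma count_zero_pattern (α : ℕ) (hα : 1 ≤ α) (w : ℤ) :
    ((Finset.univ.filter (fun v : Fin (3*α) → ZMod p =>
        w < (manhattanWeight v : ℤ) ∧ ∀ i : Fin (3*α), (i : ℕ) < 2*α → v i = 0)).card : ℤ)
      = pnomialGT p α w := by
  classical
  rw [← card_wtGT_eq α w]
  norm_cast
  have hwt : ∀ v : Fin (3*α) → ZMod p, (∀ i : Fin (3*α), (i:ℕ) < 2*α → v i = 0) →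
      manhattanWeight v
        = manhattanWeight (fun k : Fin α => v ⟨2*α + (k:ℕ), by have := k.isLt; omega⟩) := by
    intro v hv
    unfold manhattanWeight
    rw [← Finset.sum_subset (Finset.filter_subset
      (fun i : Fin (3*α) => ¬ ((i:ℕ) < 2*α)) Finset.univ)
      (fun i _ hni => by
        simp only [Finset.mem_filter, Finset.mem_univ, true_and, not_not] at hni
        rw [hv i hni]
        simp)]
    refine Finset.sum_nbij' (fun i => (⟨(i:ℕ) - 2*α, by have := i.isLt; omega⟩ : Fin α))
      (fun k => (⟨2*α + (k:ℕ), by have := k.isLt; omega⟩ : Fin (3*α))) ?_ ?_ ?_ ?_ ?_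
    · intro i _; exact Finset.mem_univ _
    · intro k _
      simp only [Finset.mem_filter, Finset.mem_univ, true_and]
      omega
    · intro i hi
      simp only [Finset.mem_filter, Finset.mem_univ, true_and] at hi
      apply Fin.ext
      simp only []
      omega
    · intro k _
      apply Fin.ext
      simp only []
      omega
    · intro i hi
      simp only [Finset.mem_filter, Finset.mem_univ, true_and] at hi
      congr 1
      apply congrArg
      apply Fin.ext
      simp only []
      omega
  refine Finset.card_bij'
    (fun v _ => (fun k : Fin α => v ⟨2*α + (k:ℕ), by have := k.isLt; omega⟩))
    (fun u _ => (fun i : Fin (3*α) =>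
      if h : (i:ℕ) < 2*α then 0 else u ⟨(i:ℕ) - 2*α, by have := i.isLt; omega⟩)) ?_ ?_ ?_ ?_
  · intro v hv
    simp only [Finset.mem_filter, Finset.mem_univ, true_and] at hv ⊢
    rw [← hwt v hv.2]
    exact hv.1
  · intro u hu
    simp only [Finset.mem_filter, Finset.mem_univ, true_and] at hu ⊢
    constructor
    · have hz : ∀ i : Fin (3*α), (i:ℕ) < 2*α →
          (fun i : Fin (3*α) => if h : (i:ℕ) < 2*α then 0
            else u ⟨(i:ℕ) - 2*α, by have := i.isLt; omega⟩) i = 0 := by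
        intro i hi; simp [hi]
      have h2 : manhattanWeight (fun i : Fin (3*α) => if h : (i:ℕ) < 2*α then 0
            else u ⟨(i:ℕ) - 2*α, by have := i.isLt; omega⟩) = manhattanWeight u := by
        rw [hwt _ hz]
        unfold manhattanWeight
        refine Finset.sum_congr rfl fun k _ => ?_
        dsimp only [Fin.val_mk]
        rw [dif_neg (by omega)]
        congr 2
        apply Fin.ext
        simp only [Fin.val_mk]
        omega
      rw [h2]
      exact hu
    · intro i hi
      simp [hi]
  · intro v hv
    simp only [Finset.mem_filter, Finset.mem_univ, true_and] at hv
    funext i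
    dsimp only
    by_cases hi : (i:ℕ) < 2*α
    · rw [dif_pos hi, hv.2 i hi]
    · rw [dif_neg hi]
      congr 1
      apply Fin.ext
      simp only []
      omega
  · intro u _
    funext k
    dsimp only [Fin.val_mk]
    rw [dif_neg (by omega)]
    congr 1
    apply Fin.ext
    simp only [Fin.val_mk]
    omega

end Membership

/-- For `α ≥ 1` and `0 ≤ w < α(p−1)`, the minimum of
`#{v ∈ 𝔽_p^{3α} : |v|_M > w ∧ f(v) ≠ 0}` over all nonzero reduced polynomials
`f ∈ 𝔽_p[x_1,…,x_{3α}]` of total degree at most `2α(p−1)` equals `C(α,>w)_p`.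
This is the distance of the quantum triorthogonal code obtained from the
Manhattan-weight puncturing of `RM_p(r, 3α)` with maximal degree
`r = α(p−1) − 1`. -/
theorem quantum_code_distance (p α : ℕ) [Fact p.Prime] (hα : 1 ≤ α)
    (w : ℕ) (hw : w < α * (p - 1)) :
    IsLeast {n : ℤ | ∃ f : MvPolynomial (Fin (3 * α)) (ZMod p), f ≠ 0 ∧
        (∀ i, f.degreeOf i ≤ p - 1) ∧ f.totalDegree ≤ 2 * α * (p - 1) ∧
        n = ((Finset.univ.filter fun v : Fin (3 * α) → ZMod p =>
          (w : ℤ) < (manhattanWeight v : ℤ) ∧ MvPolynomial.eval v f ≠ 0).card : ℤ)}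
      (pnomialGT p α (w : ℤ)) := by
  haveI : NeZero p := ⟨(Fact.out : p.Prime).ne_zero⟩
  have hp2 : 2 ≤ p := (Fact.out : p.Prime).two_le
  classical
  constructor
  · -- membership : the polynomial ∏_{i < 2α} (X i ^ (p-1) - 1)
    set I := Finset.univ.filter (fun i : Fin (3*α) => (i:ℕ) < 2*α) with hI
    set f₀ : MvPolynomial (Fin (3*α)) (ZMod p) :=
      ∏ i ∈ I, (MvPolynomial.X i ^ (p-1) + MvPolynomial.C (-1)) with hf₀
    have heval : ∀ v : Fin (3*α) → ZMod p,
        MvPolynomial.eval v f₀ = ∏ i ∈ I, ((v i) ^ (p-1) + (-1)) := by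
      intro v
      rw [hf₀, map_prod]
      refine Finset.prod_congr rfl fun i _ => ?_
      simp
    have hfactor : ∀ c : ZMod p, (c ^ (p-1) + (-1 : ZMod p)) ≠ 0 ↔ c = 0 := by
      intro c
      constructor
      · intro h
        by_contra hc
        rw [ZMod.pow_card_sub_one_eq_one hc] at h
        simp at h
      · intro h
        rw [h, zero_pow (by omega), zero_add]
        simp
    have hevalne : ∀ v : Fin (3*α) → ZMod p,
        MvPolynomial.eval v f₀ ≠ 0 ↔ ∀ i : Fin (3*α), (i:ℕ) < 2*α → v i = 0 := by
      intro v
      rw [heval v, Finset.prod_ne_zero_iff]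
      constructor
      · intro h i hi
        exact (hfactor (v i)).1 (h i (by rw [hI, Finset.mem_filter]; exact ⟨Finset.mem_univ _, hi⟩))
      · intro h i hi
        rw [hI, Finset.mem_filter] at hi
        exact (hfactor (v i)).2 (h i hi.2)
    have hf₀ne : f₀ ≠ 0 := by
      have hne := (hevalne (fun _ => 0)).2 (fun i _ => rfl)
      intro h
      rw [h, map_zero] at hne
      exact hne rfl
    have hf₀red : ∀ i, f₀.degreeOf i ≤ p - 1 := by
      intro j
      rw [hf₀]
      refine le_trans (MvPolynomial.degreeOf_prod_le _ _ _) ?_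
      have hbound : ∀ i ∈ I, (MvPolynomial.X i ^ (p-1) + MvPolynomial.C (-1)
          : MvPolynomial (Fin (3*α)) (ZMod p)).degreeOf j ≤ if j = i then p-1 else 0 := by
        intro i _
        refine le_trans (MvPolynomial.degreeOf_add_le _ _ _) ?_
        have h1 : (MvPolynomial.X i ^ (p-1)
            : MvPolynomial (Fin (3*α)) (ZMod p)).degreeOf j ≤ if j = i then p-1 else 0 := by
          refine le_trans (MvPolynomial.degreeOf_pow_le _ _ _) ?_
          rw [MvPolynomial.degreeOf_X]
          split <;> simp
        have h2 : (MvPolynomial.C (-1) : MvPolynomial (Fin (3*α)) (ZMod p)).degreeOf j = 0 :=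
          MvPolynomial.degreeOf_C _ _
        omega
      refine le_trans (Finset.sum_le_sum hbound) ?_
      rw [Finset.sum_ite_eq I j (fun _ => p-1)]
      split <;> omega
    have hf₀td : f₀.totalDegree ≤ 2 * α * (p-1) := by
      rw [hf₀]
      refine le_trans (MvPolynomial.totalDegree_finset_prod _ _) ?_
      have hbound : ∀ i ∈ I, (MvPolynomial.X i ^ (p-1) + MvPolynomial.C (-1)
          : MvPolynomial (Fin (3*α)) (ZMod p)).totalDegree ≤ p-1 := by
        intro i _
        refine le_trans (MvPolynomial.totalDegree_add _ _) ?_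
        have h1 : (MvPolynomial.X i ^ (p-1)
            : MvPolynomial (Fin (3*α)) (ZMod p)).totalDegree ≤ p-1 := by
          refine le_trans (MvPolynomial.totalDegree_pow _ _) ?_
          rw [MvPolynomial.totalDegree_X]
          omega
        have h2 : (MvPolynomial.C (-1) : MvPolynomial (Fin (3*α)) (ZMod p)).totalDegree = 0 :=
          MvPolynomial.totalDegree_C _
        omega
      refine le_trans (Finset.sum_le_sum hbound) ?_
      have hIcard : I.card ≤ 2*α := by
        have := Finset.card_le_card_of_injOn (s := I) (t := Finset.range (2*α))
          (fun i : Fin (3*α) => (i:ℕ))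
          (by intro i hi; simp only [Finset.mem_coe, hI, Finset.mem_filter, Finset.mem_univ, true_and] at hi; exact Finset.mem_coe.2 (Finset.mem_range.2 hi))
          (fun x _ y _ h => Fin.ext h)
        simpa using this
      calc ∑ _i ∈ I, (p-1) = I.card * (p-1) := by rw [Finset.sum_const, smul_eq_mul]
        _ ≤ 2*α*(p-1) := Nat.mul_le_mul_right _ hIcard
    refine ⟨f₀, hf₀ne, hf₀red, hf₀td, ?_⟩
    rw [← count_zero_pattern α hα (w : ℤ)]
    congr 1
    apply congrArg
    apply Finset.filter_congr
    intro v _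
    rw [hevalne v]
  · -- lower bound
    rintro n ⟨f, hfne, hfred, hftd, rfl⟩
    have hkey := main_bound p (3*α) f hfne hfred α 0 hα (by omega)
      (by
        have h3 : 2*α*(p-1) + α*(p-1) = 3*α*(p-1) := by ring
        omega) (w : ℤ)
    have hform : ∑ j ∈ Finset.range (p - 0), pnomialGT p (α-1) ((w:ℤ) - j)
        = pnomialGT p α (w:ℤ) := by
      rw [Nat.sub_zero]
      rw [show α = (α-1)+1 from by omega, pnomialGT_succ]
      rw [show (α-1)+1-1 = α-1 from by omega]
    rw [← hform]
    exact hkey
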